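/- Let β = (βx, βy) ∈ (0,∞)², β_max = max(βx, βy), and assume dom f* is nonempty and closed. Then for every z = (x,y) ∈ X × Y with f(x) < +∞, with a = Proj_{dom f*}(−Aᵀy), the primal–dual feasibility errors are bounded by the self-centered smoothed gap: ‖a + Aᵀy‖² + ‖Ax − b‖² ≤ 2 β_max G_β(z). -/

import Mathlib

open scoped RealInnerProductSpace
open Filter Topology Metric

noncomputable section

variable {X Y : Type*} [NormedAddCommGroup X] [InnerProductSpace ℝ X]
  [NormedAddCommGroup Y] [InnerProductSpace ℝ Y]

/-- The Lagrangian `L(x, y) = f(x) + ⟪A x − b, y⟫`. -/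
def Lag (f : X → EReal) (A : X →L[ℝ] Y) (b : Y) (x : X) (y : Y) : EReal :=
  f x + ((⟪A x - b, y⟫ : ℝ) : EReal)

/-- The smoothed duality gap `G_β((x, y); (xd, yd))`, valued in `ℝ ∪ {+∞}` (here `EReal`;
the inner expression is `−∞` exactly when `f x' = +∞`, so such `x'` do not contribute). -/
def smoothedGap (f : X → EReal) (A : X →L[ℝ] Y) (b : Y) (βx βy : ℝ)
    (x : X) (y : Y) (xd : X) (yd : Y) : EReal :=
  ⨆ w : X × Y,
    (Lag f A b x w.2 - Lag f A b w.1 y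
      - ((βx / 2 * ‖w.1 - xd‖ ^ 2 + βy / 2 * ‖w.2 - yd‖ ^ 2 : ℝ) : EReal))

/-- `f` is proper: never `−∞` and not identically `+∞`. -/
def EProper (f : X → EReal) : Prop := (∀ u, f u ≠ ⊥) ∧ ∃ u, f u ≠ ⊤

/-- Convexity for an `EReal`-valued function. -/
def EConvexOn (f : X → EReal) : Prop :=
  ∀ u v : X, ∀ t : ℝ, 0 ≤ t → t ≤ 1 →
    f (t • u + (1 - t) • v) ≤ (t : EReal) * f u + ((1 - t : ℝ) : EReal) * f v

/-- The subdifferential `∂f(x) = {q | ∀ u, f(u) ≥ f(x) + ⟪q, u − x⟫}`. -/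
def ESubdiff (f : X → EReal) (x : X) : Set X :=
  {q | ∀ u : X, f x + ((⟪q, u - x⟫ : ℝ) : EReal) ≤ f u}

/-- `p = Prox_{s f}(v)`: `p` is the (unique) minimizer of `f(·) + (1/(2s))‖· − v‖²`. -/
def IsProx (f : X → EReal) (s : ℝ) (v p : X) : Prop :=
  ∀ u : X, f p + ((1 / (2 * s) * ‖p - v‖ ^ 2 : ℝ) : EReal)
    ≤ f u + ((1 / (2 * s) * ‖u - v‖ ^ 2 : ℝ) : EReal)

/-- The Fenchel–Legendre conjugate `f*(φ) = sup_u (⟪φ, u⟫ − f(u))`. -/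
def fenchel (f : X → EReal) (φ : X) : EReal := ⨆ u : X, (((⟪φ, u⟫ : ℝ) : EReal) - f u)

/-- The domain of the Fenchel conjugate. -/
def fdom (f : X → EReal) : Set X := {φ | fenchel f φ ≠ ⊤}

/-- `a = Proj_S(v)`: `a` is the (unique, for `S` closed convex nonempty) Euclidean
projection of `v` onto `S`. -/
def IsProj (S : Set X) (v a : X) : Prop := a ∈ S ∧ ∀ u ∈ S, ‖a - v‖ ≤ ‖u - v‖

/-- `(xs, ys)` is a saddle point of the Lagrangian. -/
def IsSaddle (f : X → EReal) (A : X →L[ℝ] Y) (b : Y) (xs : X) (ys : Y) : Prop :=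
  ∀ (x' : X) (y' : Y), Lag f A b xs y' ≤ Lag f A b xs ys ∧ Lag f A b xs ys ≤ Lag f A b x' ys

/-- The set of saddle points `Z⋆`. -/
def saddleSet (f : X → EReal) (A : X →L[ℝ] Y) (b : Y) : Set (X × Y) :=
  {zs | IsSaddle f A b zs.1 zs.2}

/-- Euclidean distance from a point of `X × Y` to a set. -/
def distZ (z : X × Y) (S : Set (X × Y)) : ℝ :=
  ⨅ w : S, Real.sqrt (‖z.1 - (w : X × Y).1‖ ^ 2 + ‖z.2 - (w : X × Y).2‖ ^ 2)

/-- The projected duality gap `D(z)`, where `fx = f(x)` and `fa = f*(a)` (both finite). -/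
def PDG (fx fa : ℝ) (A : X →L[ℝ] Y) (At : Y →L[ℝ] X) (b : Y) (a x : X) (y : Y) : ℝ :=
  |fx + fa + ⟪b, y⟫| ^ 2 + ‖a + At y‖ ^ 2 + ‖A x - b‖ ^ 2


/-- A lower semicontinuous `EReal`-valued function attains its minimum on a
nonempty compact set. -/
lemma lsc_exists_min {E : Type*} [TopologicalSpace E] [T2Space E] {g : E → EReal}
    (hg : LowerSemicontinuous g) {s : Set E} (hs : IsCompact s) (hne : s.Nonempty) :
    ∃ p ∈ s, ∀ u ∈ s, g p ≤ g u := by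
  set m := sInf (g '' s) with hm
  by_cases htop : m = ⊤
  · obtain ⟨p, hp⟩ := hne
    refine ⟨p, hp, fun u hu => ?_⟩
    have : g u = ⊤ := by
      have := sInf_le (Set.mem_image_of_mem g hu)
      rw [← hm, htop, top_le_iff] at this
      exact this
    simp [this]
  · have hmlt : m < ⊤ := lt_top_iff_ne_top.2 htop
    set T : {c : EReal // m < c} → Set E := fun c => s ∩ {u | g u ≤ c.1} with hT
    have hclosed : ∀ c, IsClosed (T c) := fun c =>
      hs.isClosed.inter (hg.isClosed_preimage c.1)
    have hcompact : ∀ c, IsCompact (T c) := fun c =>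
      hs.inter_right (hg.isClosed_preimage c.1)
    have hnonempty : ∀ c, (T c).Nonempty := by
      rintro ⟨c, hc⟩
      rw [hm] at hc
      obtain ⟨e, ⟨u, hu, rfl⟩, hlt⟩ := sInf_lt_iff.1 hc
      exact ⟨u, hu, hlt.le⟩
    have hdir : Directed (· ⊇ ·) T := by
      rintro c d
      refine ⟨⟨min c.1 d.1, lt_min c.2 d.2⟩, fun u hu => ⟨hu.1, ?_⟩, fun u hu => ⟨hu.1, ?_⟩⟩
      · have h2 : g u ≤ min c.1 d.1 := hu.2
        exact h2.trans (min_le_left _ _)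
      · have h2 : g u ≤ min c.1 d.1 := hu.2
        exact h2.trans (min_le_right _ _)
    haveI : Nonempty {c : EReal // m < c} := ⟨⟨⊤, hmlt⟩⟩
    obtain ⟨p, hp⟩ := IsCompact.nonempty_iInter_of_directed_nonempty_isCompact_isClosed
      T hdir hnonempty hcompact hclosed
    have hps : p ∈ s := (Set.mem_iInter.1 hp ⟨⊤, hmlt⟩).1
    refine ⟨p, hps, fun u hu => ?_⟩
    have h1 : g p ≤ m := by
      refine le_of_forall_gt_imp_ge_of_dense fun c hc => ?_
      exact (Set.mem_iInter.1 hp ⟨c, hc⟩).2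
    exact h1.trans (sInf_le (Set.mem_image_of_mem g hu))

set_option maxHeartbeats 1000000 in
/-- primal–dual feasibility bounded by the smoothed gap.
Assume `dom f*` is nonempty and closed.  Then for every `z = (x, y)` with `f(x) < +∞`,
with `a = Proj_{dom f*}(−Aᵀy)`,
`‖a + Aᵀy‖² + ‖Ax − b‖² ≤ 2 β_max G_β(z)`. -/
theorem feasibility_le_smoothedGap
    [FiniteDimensional ℝ X] [FiniteDimensional ℝ Y]
    (f : X → EReal) (A : X →L[ℝ] Y) (At : Y →L[ℝ] X) (b : Y)
    (hf_proper : EProper f) (hf_lsc : LowerSemicontinuous f) (hf_conv : EConvexOn f)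
    (hAt : ∀ (u : X) (v : Y), ⟪A u, v⟫ = ⟪u, At v⟫)
    (βx βy : ℝ) (hβx : 0 < βx) (hβy : 0 < βy)
    (hdom_ne : (fdom f).Nonempty) (hdom_closed : IsClosed (fdom f))
    (x : X) (y : Y) (hfx : f x < ⊤)
    (a : X) (ha : IsProj (fdom f) (-(At y)) a) :
    ((‖a + At y‖ ^ 2 + ‖A x - b‖ ^ 2 : ℝ) : EReal)
      ≤ ((2 * max βx βy : ℝ) : EReal) * smoothedGap f A b βx βy x y x y := by
    classical
  obtain ⟨hbot, u0, hu0⟩ := hf_proper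
  obtain ⟨φ0, hφ0⟩ := hdom_ne
  -- f x is a real number
  set fx : ℝ := (f x).toReal with hfx_def
  have hfx_eq : f x = (fx : EReal) := (EReal.coe_toReal hfx.ne (hbot x)).symm
  -- affine minorant of f
  set c0 : ℝ := (fenchel f φ0).toReal with hc0_def
  have hfen_bot : fenchel f φ0 ≠ ⊥ := by
    have h1 : ((⟪φ0, x⟫ : ℝ) : EReal) - f x ≤ fenchel f φ0 :=
      le_iSup (fun u => ((⟪φ0, u⟫ : ℝ) : EReal) - f u) x
    rw [hfx_eq, ← EReal.coe_sub] at h1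
    intro h
    rw [h, le_bot_iff] at h1
    exact (EReal.coe_ne_bot _) h1
  have hfen_eq : fenchel f φ0 = (c0 : EReal) := (EReal.coe_toReal hφ0 hfen_bot).symm
  clear_value fx c0
  have hf_lb : ∀ u : X, ((⟪φ0, u⟫ - c0 : ℝ) : EReal) ≤ f u := by
    intro u
    by_cases hu : f u = ⊤
    · simp [hu]
    · have hfu_eq : f u = ((f u).toReal : EReal) := (EReal.coe_toReal hu (hbot u)).symm
      have h1 : ((⟪φ0, u⟫ : ℝ) : EReal) - f u ≤ fenchel f φ0 :=
        le_iSup (fun u => ((⟪φ0, u⟫ : ℝ) : EReal) - f u) u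
      rw [hfu_eq, hfen_eq, ← EReal.coe_sub, EReal.coe_le_coe_iff] at h1
      rw [hfu_eq, EReal.coe_le_coe_iff]
      linarith
  -- the prox-type objective
  set v : X := x - βx⁻¹ • (At y) with hv_def
  set g : X → EReal := fun u => f u + ((βx / 2 * ‖u - v‖ ^ 2 : ℝ) : EReal) with hg_def
  clear_value v
  have hg_lsc : LowerSemicontinuous g := by
    rw [hg_def]
    apply hf_lsc.add'
    · apply Continuous.lowerSemicontinuous
      exact continuous_coe_real_ereal.comp (by fun_prop)
    · intro u
      exact EReal.continuousAt_add (Or.inr (EReal.coe_ne_bot _)) (Or.inl (hbot u))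
  set gx : ℝ := fx + βx / 2 * ‖x - v‖ ^ 2 with hgx_def
  have hgx_eq : g x = (gx : EReal) := by
    rw [hg_def]; simp only []; rw [hfx_eq, ← EReal.coe_add]
  clear_value g gx
  set R : ℝ := max ‖x - v‖ (2 / βx * (‖φ0‖ + |c0| + |⟪φ0, v⟫| + |gx| + 1) + 1) with hR_def
  clear_value R
  have hcoer : ∀ u : X, R < ‖u - v‖ → (gx : EReal) < g u := by
    intro u hu
    have hlow : ((⟪φ0, u⟫ - c0 + βx / 2 * ‖u - v‖ ^ 2 : ℝ) : EReal) ≤ g u := by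
      rw [hg_def]; simp only []
      rw [EReal.coe_add]
      exact add_le_add (hf_lb u) le_rfl
    refine lt_of_lt_of_le ?_ hlow
    rw [EReal.coe_lt_coe_iff]
    have hip : -(‖φ0‖ * ‖u - v‖) + ⟪φ0, v⟫ ≤ ⟪φ0, u⟫ := by
      have h2 : ⟪φ0, u⟫ = ⟪φ0, u - v⟫ + ⟪φ0, v⟫ := by
        rw [← inner_add_right]
        congr 1
        abel
      have h3 : |⟪φ0, u - v⟫| ≤ ‖φ0‖ * ‖u - v‖ := abs_real_inner_le_norm _ _
      have h4 : -(‖φ0‖ * ‖u - v‖) ≤ ⟪φ0, u - v⟫ := neg_le_of_abs_le h3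
      linarith
    rw [hR_def] at hu
    have hRle : 2 / βx * (‖φ0‖ + |c0| + |⟪φ0, v⟫| + |gx| + 1) + 1 < ‖u - v‖ :=
      lt_of_le_of_lt (le_max_right _ _) hu
    have ht1 : (1 : ℝ) ≤ ‖u - v‖ := by
      have : (0:ℝ) ≤ 2 / βx * (‖φ0‖ + |c0| + |⟪φ0, v⟫| + |gx| + 1) := by positivity
      linarith
    have habs1 : gx ≤ |gx| := le_abs_self gx
    have habs2 : c0 ≤ |c0| := le_abs_self c0
    have habs3 : -|⟪φ0, v⟫| ≤ ⟪φ0, v⟫ := neg_abs_le _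
    have hb0 : (0:ℝ) < βx := hβx
    have hX : |c0| + |⟪φ0, v⟫| + |gx| + 1 < βx / 2 * ‖u - v‖ - ‖φ0‖ := by
      have h5 : βx / 2 * (2 / βx * (‖φ0‖ + |c0| + |⟪φ0, v⟫| + |gx| + 1) + 1)
          = ‖φ0‖ + |c0| + |⟪φ0, v⟫| + |gx| + 1 + βx / 2 := by
        field_simp
      have h6 := mul_lt_mul_of_pos_left hRle (half_pos hb0)
      rw [h5] at h6
      linarith
    have hXpos : (0:ℝ) < βx / 2 * ‖u - v‖ - ‖φ0‖ := by
      have : (0:ℝ) ≤ |c0| + |⟪φ0, v⟫| + |gx| + 1 := by positivity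
      linarith
    have hB : |c0| + |⟪φ0, v⟫| + |gx| + 1 ≤ βx / 2 * ‖u - v‖ ^ 2 - ‖φ0‖ * ‖u - v‖ := by
      have h7 : 1 * (βx / 2 * ‖u - v‖ - ‖φ0‖) ≤ ‖u - v‖ * (βx / 2 * ‖u - v‖ - ‖φ0‖) :=
        mul_le_mul_of_nonneg_right ht1 hXpos.le
      nlinarith [h7]
    nlinarith [hip, hB, habs1, habs2, habs3]
  -- minimizer of g
  have hx_mem : x ∈ closedBall v R := by
    rw [mem_closedBall, dist_eq_norm, hR_def]
    exact le_max_left _ _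
  obtain ⟨xb, hxb_mem, hxb_min⟩ := lsc_exists_min hg_lsc (isCompact_closedBall v R)
    ⟨x, hx_mem⟩
  have hmin : ∀ u : X, g xb ≤ g u := by
    intro u
    by_cases hu : u ∈ closedBall v R
    · exact hxb_min u hu
    · rw [mem_closedBall, dist_eq_norm, not_le] at hu
      calc g xb ≤ g x := hxb_min x hx_mem
        _ = (gx : EReal) := hgx_eq
        _ ≤ g u := (hcoer u hu).le
  have hgxb_ne_top : g xb ≠ ⊤ := by
    intro h
    have := hmin x
    rw [h, hgx_eq, top_le_iff] at this
    exact (EReal.coe_ne_top gx) this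
  have hfxb_ne_top : f xb ≠ ⊤ := by
    intro h
    apply hgxb_ne_top
    rw [hg_def]
    show f xb + ((βx / 2 * ‖xb - v‖ ^ 2 : ℝ) : EReal) = ⊤
    rw [h]
    exact EReal.top_add_of_ne_bot (EReal.coe_ne_bot _)
  set fb : ℝ := (f xb).toReal with hfb_def
  have hfb_eq : f xb = (fb : EReal) := (EReal.coe_toReal hfxb_ne_top (hbot xb)).symm
  clear_value fb
  -- subgradient inequality
  set q : X := βx • (v - xb) with hq_def
  have hq_alt : q = βx • (x - xb) - At y := by
    rw [hq_def, hv_def]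
    rw [smul_sub, smul_sub, smul_inv_smul₀ hβx.ne']
    module
  clear_value q
  have hsub : ∀ u : X, f xb + ((⟪q, u - xb⟫ : ℝ) : EReal) ≤ f u := by
    intro u
    by_cases hu : f u = ⊤
    · rw [hu]; exact le_top
    · have hfu_eq : f u = ((f u).toReal : EReal) := (EReal.coe_toReal hu (hbot u)).symm
      set fu : ℝ := (f u).toReal with hfu_def
      clear_value fu
      have hstep : ∀ t : ℝ, 0 < t → t ≤ 1 →
          fb ≤ fu + βx * ⟪xb - v, u - xb⟫ + t * (βx / 2 * ‖u - xb‖ ^ 2) := by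
        intro t ht0 ht1
        set ut : X := t • u + (1 - t) • xb with hut_def
        clear_value ut
        have hconv := hf_conv u xb t ht0.le ht1
        rw [← hut_def] at hconv
        have hmin_ut := hmin ut
        have hut_sub : ut - v = (xb - v) + t • (u - xb) := by
          rw [hut_def]
          module
        have hnorm : ‖ut - v‖ ^ 2 =
            ‖xb - v‖ ^ 2 + 2 * (t * ⟪xb - v, u - xb⟫) + t ^ 2 * ‖u - xb‖ ^ 2 := by
          rw [hut_sub, norm_add_sq_real, real_inner_smul_right, norm_smul]
          rw [Real.norm_eq_abs, abs_of_pos ht0]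
          ring
        -- f ut is finite
        have hconv' : f ut ≤ ((t * fu + (1 - t) * fb : ℝ) : EReal) := by
          rw [EReal.coe_add, EReal.coe_mul, EReal.coe_mul]
          rw [hfu_eq, hfb_eq] at hconv
          exact hconv
        have hut_ne_top : f ut ≠ ⊤ :=
          fun h => by rw [h] at hconv'; exact (EReal.coe_ne_top _) (top_le_iff.1 hconv')
        have hut_eq : f ut = ((f ut).toReal : EReal) :=
          (EReal.coe_toReal hut_ne_top (hbot ut)).symm
        set ft : ℝ := (f ut).toReal with hft_def
        clear_value ft
        have hconvR : ft ≤ t * fu + (1 - t) * fb := by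
          rw [hut_eq, EReal.coe_le_coe_iff] at hconv'
          exact hconv'
        have hminR : fb + βx / 2 * ‖xb - v‖ ^ 2 ≤ ft + βx / 2 * ‖ut - v‖ ^ 2 := by
          rw [hg_def] at hmin_ut
          simp only [] at hmin_ut
          rw [hfb_eq, hut_eq, ← EReal.coe_add, ← EReal.coe_add,
            EReal.coe_le_coe_iff] at hmin_ut
          exact hmin_ut
        rw [hnorm] at hminR
        nlinarith [sq_nonneg t, hminR, hconvR]
      -- pass to the limit t → 0
      have hlim : fb ≤ fu + βx * ⟪xb - v, u - xb⟫ := by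
        by_contra hcon
        push_neg at hcon
        set C : ℝ := fu + βx * ⟪xb - v, u - xb⟫ with hC_def
        clear_value C
        set K : ℝ := βx / 2 * ‖u - xb‖ ^ 2 with hK_def
        clear_value K
        have hK0 : 0 ≤ K := by rw [hK_def]; positivity
        set δ : ℝ := fb - C with hδ_def
        clear_value δ
        have hδ0 : 0 < δ := by rw [hδ_def]; linarith
        set t : ℝ := min 1 (δ / (2 * (K + 1))) with ht_def
        clear_value t
        have h2K : (0:ℝ) < 2 * (K + 1) := by linarith
        have ht0 : 0 < t := by rw [ht_def]; exact lt_min one_pos (div_pos hδ0 h2K)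
        have ht1 : t ≤ 1 := by rw [ht_def]; exact min_le_left _ _
        have := hstep t ht0 ht1
        have htle : t ≤ δ / (2 * (K + 1)) := by rw [ht_def]; exact min_le_right _ _
        have htK : t * K ≤ δ / (2 * (K + 1)) * K :=
          mul_le_mul_of_nonneg_right htle hK0
        have h5 : δ / (2 * (K + 1)) * K < δ := by
          rw [div_mul_eq_mul_div, div_lt_iff₀ h2K]
          nlinarith [mul_nonneg hδ0.le hK0, hδ0]
        linarith
      rw [hfb_eq, hfu_eq, ← EReal.coe_add, EReal.coe_le_coe_iff]
      have hip : ⟪q, u - xb⟫ = -(βx * ⟪xb - v, u - xb⟫) := by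
        rw [hq_def, real_inner_smul_left]
        have : v - xb = -(xb - v) := by abel
        rw [this, inner_neg_left]
        ring
      rw [hip]
      linarith
  -- q is in the domain of the conjugate
  have hq_dom : q ∈ fdom f := by
    rw [fdom, Set.mem_setOf_eq, fenchel]
    intro htop
    have hb : (⨆ u : X, (((⟪q, u⟫ : ℝ) : EReal) - f u)) ≤ ((⟪q, xb⟫ - fb : ℝ) : EReal) := by
      apply iSup_le
      intro u
      by_cases hu : f u = ⊤
      · rw [hu, EReal.sub_top]
        exact bot_le
      · have hfu_eq : f u = ((f u).toReal : EReal) := (EReal.coe_toReal hu (hbot u)).symm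
        have := hsub u
        rw [hfb_eq, hfu_eq, ← EReal.coe_add, EReal.coe_le_coe_iff] at this
        rw [hfu_eq, ← EReal.coe_sub, EReal.coe_le_coe_iff]
        have hir : ⟪q, u - xb⟫ = ⟪q, u⟫ - ⟪q, xb⟫ := by
          rw [inner_sub_right]
        linarith
    rw [htop, top_le_iff] at hb
    exact (EReal.coe_ne_top _) hb
  -- projection bound
  have hproj : ‖a + At y‖ ≤ βx * ‖x - xb‖ := by
    have h1 := ha.2 q hq_dom
    have h2 : a - -(At y) = a + At y := by abel
    have h3 : q - -(At y) = βx • (x - xb) := by rw [hq_alt]; abel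
    have h4 : ‖βx • (x - xb)‖ = βx * ‖x - xb‖ := by
      rw [norm_smul, Real.norm_eq_abs, abs_of_pos hβx]
    rw [h2, h3, h4] at h1
    exact h1
  -- key inequality from subgradient at x
  have hkey : fb + (βx * ‖x - xb‖ ^ 2 + ⟪xb - x, At y⟫) ≤ fx := by
    have := hsub x
    rw [hfb_eq, hfx_eq, ← EReal.coe_add, EReal.coe_le_coe_iff] at this
    have hip : ⟪q, x - xb⟫ = βx * ‖x - xb‖ ^ 2 + ⟪xb - x, At y⟫ := by
      rw [hq_alt, inner_sub_left, real_inner_smul_left, real_inner_self_eq_norm_sq]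
      have : ⟪At y, x - xb⟫ = -⟪xb - x, At y⟫ := by
        rw [real_inner_comm]
        have hxx : x - xb = -(xb - x) := by abel
        rw [hxx, inner_neg_left]
      rw [this]
      ring
    linarith [this, hip.symm.le, hip.le]
  -- the chosen dual point
  set r : ℝ := (fx + ⟪A x - b, y + βy⁻¹ • (A x - b)⟫) - (fb + ⟪A xb - b, y⟫)
      - (βx / 2 * ‖xb - x‖ ^ 2 + βy / 2 * ‖(y + βy⁻¹ • (A x - b)) - y‖ ^ 2) with hr_def
  clear_value r
  have hG : (r : EReal) ≤ smoothedGap f A b βx βy x y x y := by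
    have hterm : Lag f A b x (y + βy⁻¹ • (A x - b)) - Lag f A b xb y
        - ((βx / 2 * ‖xb - x‖ ^ 2
            + βy / 2 * ‖(y + βy⁻¹ • (A x - b)) - y‖ ^ 2 : ℝ) : EReal) = (r : EReal) := by
      rw [hr_def]
      simp only [Lag]
      rw [hfx_eq, hfb_eq, ← EReal.coe_add, ← EReal.coe_add, ← EReal.coe_sub, ← EReal.coe_sub]
    rw [← hterm]
    exact le_iSup (fun w : X × Y => Lag f A b x w.2 - Lag f A b w.1 y
      - ((βx / 2 * ‖w.1 - x‖ ^ 2 + βy / 2 * ‖w.2 - y‖ ^ 2 : ℝ) : EReal))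
      ((xb, y + βy⁻¹ • (A x - b)) : X × Y)
  -- the real inequality
  have hreal : ‖a + At y‖ ^ 2 + ‖A x - b‖ ^ 2 ≤ 2 * max βx βy * r := by
    have hi1 : ⟪A x - b, y + βy⁻¹ • (A x - b)⟫ = ⟪A x - b, y⟫ + βy⁻¹ * ‖A x - b‖ ^ 2 := by
      rw [inner_add_right, real_inner_smul_right, real_inner_self_eq_norm_sq]
    have hi2 : ⟪A xb - b, y⟫ = ⟪xb - x, At y⟫ + ⟪A x - b, y⟫ := by
      have h4 : A xb - b = A (xb - x) + (A x - b) := by rw [map_sub]; abel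
      rw [h4, inner_add_left, hAt]
    have hi3 : ‖(y + βy⁻¹ • (A x - b)) - y‖ = βy⁻¹ * ‖A x - b‖ := by
      have h5 : (y + βy⁻¹ • (A x - b)) - y = βy⁻¹ • (A x - b) := by abel
      rw [h5, norm_smul, Real.norm_eq_abs, abs_of_pos (inv_pos.2 hβy)]
    have hn : ‖xb - x‖ = ‖x - xb‖ := norm_sub_rev _ _
    have hmx : βx ≤ max βx βy := le_max_left _ _
    have hmy : βy ≤ max βx βy := le_max_right _ _
    have hsq : ‖a + At y‖ ^ 2 ≤ (βx * ‖x - xb‖) ^ 2 := by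
      apply sq_le_sq' _ hproj
      have : 0 ≤ ‖a + At y‖ := norm_nonneg _
      nlinarith [norm_nonneg (a + At y), hproj]
    have hr_lb : βx / 2 * ‖x - xb‖ ^ 2 + 1 / (2 * βy) * ‖A x - b‖ ^ 2 ≤ r := by
      rw [hr_def, hi1, hi2, hi3, hn]
      have h6 : βy / 2 * (βy⁻¹ * ‖A x - b‖) ^ 2 = 1 / (2 * βy) * ‖A x - b‖ ^ 2 := by
        field_simp
      have hb2 : (2:ℝ) * (1 / (2 * βy)) = βy⁻¹ := by
        field_simp
      have h6b : βy⁻¹ * ‖A x - b‖ ^ 2 = 2 * (1 / (2 * βy) * ‖A x - b‖ ^ 2) := by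
        rw [← hb2]
        ring
      rw [h6]
      nlinarith [hkey, h6b]
    have h8 : ‖a + At y‖ ^ 2 ≤ βx ^ 2 * ‖x - xb‖ ^ 2 := by
      rw [← mul_pow]
      exact hsq
    have h9 : βx ^ 2 * ‖x - xb‖ ^ 2 ≤ max βx βy * (βx * ‖x - xb‖ ^ 2) := by
      nlinarith [mul_nonneg (mul_nonneg (sub_nonneg.2 hmx) hβx.le) (sq_nonneg ‖x - xb‖)]
    have hm1 : (1 : ℝ) ≤ max βx βy * βy⁻¹ := by
      rw [← mul_inv_cancel₀ hβy.ne']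
      exact mul_le_mul_of_nonneg_right hmy (inv_nonneg.2 hβy.le)
    have h10 : ‖A x - b‖ ^ 2 ≤ max βx βy * (βy⁻¹ * ‖A x - b‖ ^ 2) := by
      nlinarith [mul_le_mul_of_nonneg_right hm1 (sq_nonneg ‖A x - b‖)]
    have h11 : 2 * max βx βy * (βx / 2 * ‖x - xb‖ ^ 2 + 1 / (2 * βy) * ‖A x - b‖ ^ 2)
        ≤ 2 * max βx βy * r :=
      mul_le_mul_of_nonneg_left hr_lb
        (by nlinarith [le_trans hβx.le (le_max_left βx βy)])
    have h12 : 2 * max βx βy * (βx / 2 * ‖x - xb‖ ^ 2 + 1 / (2 * βy) * ‖A x - b‖ ^ 2)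
        = max βx βy * (βx * ‖x - xb‖ ^ 2) + max βx βy * (βy⁻¹ * ‖A x - b‖ ^ 2) := by
      field_simp
    linarith
  -- conclude in EReal
  calc ((‖a + At y‖ ^ 2 + ‖A x - b‖ ^ 2 : ℝ) : EReal)
      ≤ ((2 * max βx βy * r : ℝ) : EReal) := EReal.coe_le_coe_iff.2 hreal
    _ = ((2 * max βx βy : ℝ) : EReal) * (r : EReal) := EReal.coe_mul _ _
    _ ≤ ((2 * max βx βy : ℝ) : EReal) * smoothedGap f A b βx βy x y x y := by
        apply mul_le_mul_of_nonneg_left hG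
        exact EReal.coe_nonneg.2 (by nlinarith [le_trans hβx.le (le_max_left βx βy)])
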